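/- Let u and v be two words of the same type such that lin(u) = lin(v), con₂(u) = con₂(v) and con₍>2₎(u) = con₍>2₎(v). Let Θ: 𝔄 → 𝔄⁺ be a substitution with the property that whenever Θ(x) contains more than one distinct variable, x ∈ lin(u) ∪ con₂(u). Then Θ(u) and Θ(v) are of the same type. -/

import Mathlib

/-- The alphabet of variables. -/
abbrev Var := ℕ

/-- Words are (possibly empty) lists of variables; elements of the free
semigroup `𝔄⁺` are the nonempty ones. -/
abbrev Word := List Var

/-- Two words are of the same type if they agree after collapsing each
maximal constant run (island) to a single letter. -/
def sameType (u v : Word) : Prop :=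
  u.destutter (· ≠ ·) = v.destutter (· ≠ ·)

/-- The number of islands of a word. -/
def height (u : Word) : ℕ := (u.destutter (· ≠ ·)).length

/-- The set of variables occurring in a word. -/
def con (u : Word) : Set Var := {x | x ∈ u}

/-- `del u X` is the word obtained from `u` by deleting all occurrences of all
variables not in the list `X`; i.e. `u(x₁,…,x_k)` for `X = [x₁,…,x_k]`. -/
def del (u : Word) (X : List Var) : Word := u.filter (· ∈ X)

/-- The set of linear variables of `u` (occurring exactly once). -/
def lin (u : Word) : Set Var := {x | u.count x = 1}

/-- The set of non-linear variables of `u` (occurring at least twice). -/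
def nonlin (u : Word) : Set Var := {x | 2 ≤ u.count x}

/-- The set of variables occurring exactly twice in `u`. -/
def con2 (u : Word) : Set Var := {x | u.count x = 2}

/-- The set of variables occurring at least three times in `u`. -/
def conGt2 (u : Word) : Set Var := {x | 3 ≤ u.count x}

/-- Applying a substitution `Θ : 𝔄 → 𝔄⁺` to a word, as the extension of `Θ`
to a homomorphism. -/
def subst (Θ : Var → Word) (u : Word) : Word := u.flatMap Θ

/-- `w` is a power (with positive exponent) of the variable `c`. -/
def isPowerOf (w : Word) (c : Var) : Prop := ∃ k : ℕ, 0 < k ∧ w = List.replicate k c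

/-- A monoid `M` satisfies the identity `u ≈ v` if every monoid homomorphism
from the free monoid `𝔄*` to `M` (equivalently, the extension of every map
`φ : 𝔄 → M`) identifies `u` and `v`. -/
def MSat (M : Type) [Monoid M] (u v : Word) : Prop :=
  ∀ φ : Var → M, (u.map φ).prod = (v.map φ).prod

/-- Evaluation of a nonempty word in a semigroup under `φ : 𝔄 → S`
(the empty word evaluates to `none`). -/
def evalS {S : Type} [Semigroup S] (φ : Var → S) : Word → Option S
  | [] => none
  | a :: t => some ((t.map φ).foldl (· * ·) (φ a))

/-- A semigroup `S` satisfies the identity `u ≈ v` between nonempty words if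
every semigroup homomorphism from the free semigroup `𝔄⁺` to `S` identifies
`u` and `v`. -/
def SSat (S : Type) [Semigroup S] (u v : Word) : Prop :=
  ∀ φ : Var → S, evalS φ u = evalS φ v

/-- Property (C_ℓ) for a monoid: every word in two variables of height at most
`ℓ` can form an identity of `M` only with a word of the same type. -/
def MPropC (M : Type) [Monoid M] (ℓ : ℕ) : Prop :=
  ∀ x y : Var, x ≠ y → ∀ u : Word, u ≠ [] → (∀ c ∈ u, c = x ∨ c = y) →
    height u ≤ ℓ → ∀ v : Word, MSat M u v → sameType u v

/-- Property (C_ℓ) for a semigroup. -/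
def SPropC (S : Type) [Semigroup S] (ℓ : ℕ) : Prop :=
  ∀ x y : Var, x ≠ y → ∀ u : Word, u ≠ [] → (∀ c ∈ u, c = x ∨ c = y) →
    height u ≤ ℓ → ∀ v : Word, SSat S u v → sameType u v

/-- A monoid is finitely based if some finite set of identities it satisfies
entails all its identities (in every monoid). -/
def MonoidFB (M : Type) [Monoid M] : Prop :=
  ∃ Sig : Finset (Word × Word),
    (∀ p ∈ Sig, MSat M p.1 p.2) ∧
    ∀ (N : Type) [Monoid N], (∀ p ∈ Sig, MSat N p.1 p.2) →
      ∀ u v : Word, MSat M u v → MSat N u v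

/-- A semigroup is finitely based if some finite set of identities (between
nonempty words) it satisfies entails all its identities (in every semigroup). -/
def SemigroupFB (S : Type) [Semigroup S] : Prop :=
  ∃ Sig : Finset (Word × Word),
    (∀ p ∈ Sig, p.1 ≠ [] ∧ p.2 ≠ [] ∧ SSat S p.1 p.2) ∧
    ∀ (T : Type) [Semigroup T], (∀ p ∈ Sig, SSat T p.1 p.2) →
      ∀ u v : Word, u ≠ [] → v ≠ [] → SSat S u v → SSat T u v

/-- `B` is a block of `u` occurring as `u = p ++ B ++ s`: it contains no linear
variables of `u` and is maximal with this property. -/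
def IsBlockAt (u p B s : Word) : Prop :=
  u = p ++ B ++ s ∧ (∀ c ∈ B, c ∉ lin u) ∧
  (∀ c : Var, p.getLast? = some c → c ∈ lin u) ∧
  (∀ c : Var, s.head? = some c → c ∈ lin u)

/-- The word `Uₙ = (x₁⋯xₙ)(xₙ⋯x₁)(x₁⋯xₙ)`. -/
def Uword (n : ℕ) (x : Fin n → Var) : Word :=
  List.ofFn x ++ (List.ofFn x).reverse ++ List.ofFn x

/-- The word `Vₙ = (x₁⋯xₙ)(x₁²x₂²⋯xₙ²)`. -/
def Vword (n : ℕ) (x : Fin n → Var) : Word :=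
  List.ofFn x ++ (List.ofFn x).flatMap (fun c => [c, c])

/- ===== Auxiliary development for stmt10 ===== -/
namespace Stmt10Aux

/-- Abbreviation for the destutter used in `sameType`. -/
abbrev D (l : Word) : Word := l.destutter (· ≠ ·)

/-- Drop leading occurrences of `a`. -/
abbrev dw (a : Var) (l : Word) : Word := l.dropWhile (fun x => x == a)

lemma dw_nil (a : Var) : dw a [] = [] := rfl

lemma dw_cons_self (a : Var) (l : Word) : dw a (a :: l) = dw a l := by
  simp [dw, List.dropWhile_cons]

lemma dw_cons_ne {a b : Var} (h : b ≠ a) (l : Word) : dw a (b :: l) = b :: l := by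
  simp [dw, List.dropWhile_cons, h]

lemma dw_idem (a : Var) (l : Word) : dw a (dw a l) = dw a l := by
  induction l with
  | nil => rfl
  | cons b t ih =>
    by_cases h : b = a
    · subst h; rw [dw_cons_self]; exact ih
    · rw [dw_cons_ne h, dw_cons_ne h]

lemma dw_head {a : Var} {r : Word} (h : (a :: r).Chain' (· ≠ ·)) : dw a r = r := by
  cases r with
  | nil => rfl
  | cons c r' =>
    have : a ≠ c := (List.isChain_cons_cons.mp h).1
    exact dw_cons_ne (Ne.symm this) r'

lemma lemC : ∀ (l : Word) (a : Var), l.destutter' (· ≠ ·) a = a :: dw a (D l) := by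
  intro l
  induction l with
  | nil => intro a; rfl
  | cons b t ih =>
    intro a
    have hDbt : D (b :: t) = b :: dw b (D t) := by
      show (b :: t).destutter (· ≠ ·) = _
      rw [List.destutter_cons', ih b]
    rw [List.destutter'_cons, hDbt]
    by_cases h : a = b
    · subst h
      rw [if_neg (by simp), ih a, dw_cons_self, dw_idem]
    · rw [if_pos h, ih b, dw_cons_ne (Ne.symm h)]

lemma D_cons (a : Var) (l : Word) : D (a :: l) = a :: dw a (D l) := by
  show (a :: l).destutter (· ≠ ·) = _
  rw [List.destutter_cons', lemC]

lemma lemK (l : Word) : ∀ y : Word, D (D l ++ y) = D (l ++ y) := by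
  induction l with
  | nil => intro y; rfl
  | cons a t ih =>
    intro y
    rw [D_cons, List.cons_append, List.cons_append, D_cons, D_cons, ← ih y]
    rcases hDt : D t with _ | ⟨b, r⟩
    · rfl
    · by_cases hab : b = a
      · subst hab
        have hchain : (b :: r).Chain' (· ≠ ·) := by
          rw [← hDt]; exact List.isChain_destutter _ t
        rw [dw_cons_self, dw_head hchain, List.cons_append, D_cons,
          dw_cons_self, dw_idem]
      · rw [dw_cons_ne hab]

lemma lemIdem (l : Word) : D (D l) = D l := by
  have := lemK l []
  simpa using this

lemma lemH : ∀ (x y : Word), D (x ++ D y) = D (x ++ y) := by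
  intro x
  induction x with
  | nil => intro y; simpa using lemIdem y
  | cons a x' ih =>
    intro y
    rw [List.cons_append, List.cons_append, D_cons, D_cons, ih y]

lemma lemJ : ∀ L : List Word, D L.flatten = D ((L.map D).flatten) := by
  intro L
  induction L with
  | nil => rfl
  | cons h T ih =>
    calc D ((h :: T).flatten) = D (h ++ T.flatten) := rfl
      _ = D (D h ++ T.flatten) := (lemK h _).symm
      _ = D (D h ++ D T.flatten) := (lemH _ _).symm
      _ = D (D h ++ D ((T.map D).flatten)) := by rw [ih]
      _ = D (D h ++ (T.map D).flatten) := lemH _ _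
      _ = D (((h :: T).map D).flatten) := rfl

lemma destutter_replicate (a : Var) : ∀ n : ℕ, D (List.replicate (n + 1) a) = [a] := by
  intro n
  induction n with
  | zero => rfl
  | succ m ih =>
    rw [List.replicate_succ, D_cons, ih, dw_cons_self, dw_nil]

/-- Run-length encoding. -/
def rle : Word → List (Var × ℕ)
  | [] => []
  | a :: t =>
    match rle t with
    | [] => [(a, 1)]
    | (b, k) :: r => if a = b then (a, k + 1) :: r else (a, 1) :: (b, k) :: r

lemma rle_cons_nil {a : Var} {t : Word} (h : rle t = []) :
    rle (a :: t) = [(a, 1)] := by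
  rw [rle, h]

lemma rle_cons_eq {a : Var} {t : Word} {k : ℕ} {r : List (Var × ℕ)}
    (h : rle t = (a, k) :: r) : rle (a :: t) = (a, k + 1) :: r := by
  rw [rle, h]
  simp

lemma rle_cons_ne {a b : Var} {t : Word} {k : ℕ} {r : List (Var × ℕ)}
    (h : rle t = (b, k) :: r) (hab : a ≠ b) :
    rle (a :: t) = (a, 1) :: (b, k) :: r := by
  rw [rle, h]
  simp [hab]

lemma rle_r1 : ∀ u : Word, ((rle u).map (fun e => List.replicate e.2 e.1)).flatten = u := by
  intro u
  induction u with
  | nil => rfl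
  | cons a t ih =>
    rcases h : rle t with _ | ⟨⟨b, k⟩, r⟩
    · rw [h] at ih
      simp only [List.map_nil, List.flatten_nil] at ih
      rw [rle_cons_nil h, ← ih]
      rfl
    · rw [h] at ih
      by_cases hab : a = b
      · subst hab
        rw [rle_cons_eq h]
        simp only [List.map_cons, List.flatten_cons] at ih ⊢
        rw [List.replicate_succ, List.cons_append, ih]
      · rw [rle_cons_ne h hab]
        simp only [List.map_cons, List.flatten_cons] at ih ⊢
        rw [ih]
        rfl

lemma rle_r2 : ∀ u : Word, (rle u).map Prod.fst = D u := by
  intro u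
  induction u with
  | nil => rfl
  | cons a t ih =>
    rcases h : rle t with _ | ⟨⟨b, k⟩, r⟩
    · rw [h] at ih
      simp only [List.map_nil] at ih
      rw [rle_cons_nil h, D_cons, ← ih, dw_nil]
      rfl
    · rw [h] at ih
      by_cases hab : a = b
      · subst hab
        rw [rle_cons_eq h, D_cons, ← ih]
        simp only [List.map_cons]
        have hchain : (a :: (r.map Prod.fst)).Chain' (· ≠ ·) := by
          have h2 : (D t).Chain' (· ≠ ·) := List.isChain_destutter _ t
          rw [← ih] at h2
          simpa using h2
        rw [dw_cons_self, dw_head hchain]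
      · rw [rle_cons_ne h hab, D_cons, ← ih]
        simp only [List.map_cons]
        rw [dw_cons_ne (Ne.symm hab)]

lemma rle_r3 : ∀ u : Word, ∀ e ∈ rle u, 1 ≤ e.2 := by
  intro u
  induction u with
  | nil => intro e he; simp [rle] at he
  | cons a t ih =>
    intro e he
    rcases h : rle t with _ | ⟨⟨b, k⟩, r⟩
    · rw [rle_cons_nil h] at he
      simp at he
      simp [he]
    · rw [h] at ih
      by_cases hab : a = b
      · subst hab
        rw [rle_cons_eq h] at he
        rcases List.mem_cons.mp he with h1 | h1
        · subst h1; simp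
        · exact ih e (List.mem_cons_of_mem _ h1)
      · rw [rle_cons_ne h hab] at he
        rcases List.mem_cons.mp he with h1 | h1
        · subst h1; simp
        · exact ih e h1

lemma rle_eq_nil {u : Word} (h : rle u = []) : u = [] := by
  have := rle_r1 u
  rw [h] at this
  simpa using this.symm

lemma rle_r4 : ∀ (u : Word) (c : Var),
    (((rle u).filter (fun e => e.1 == c)).map Prod.snd).sum = u.count c := by
  intro u
  induction u with
  | nil => intro c; simp [rle]
  | cons a t ih =>
    intro c
    rcases h : rle t with _ | ⟨⟨b, k⟩, r⟩
    · have ht : t = [] := rle_eq_nil h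
      subst ht
      by_cases hac : a = c <;>
        simp [rle_cons_nil h, List.filter_cons, hac, List.count_cons]
    · have iht := ih c
      rw [h] at iht
      by_cases hab : a = b
      · subst hab
        rw [rle_cons_eq h, List.filter_cons]
        rw [List.filter_cons] at iht
        by_cases hac : a = c
        · subst hac
          rw [if_pos (by simp)] at iht ⊢
          simp only [List.map_cons, List.sum_cons] at iht ⊢
          rw [List.count_cons_self, ← iht]
          omega
        · rw [if_neg (by simpa using hac)] at iht ⊢
          rw [iht, List.count_cons]
          simp [hac]
      · rw [rle_cons_ne h hab, List.filter_cons]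
        by_cases hac : a = c
        · subst hac
          rw [if_pos (by simp)]
          simp only [List.map_cons, List.sum_cons]
          rw [iht, List.count_cons_self]
          omega
        · rw [if_neg (by simpa using hac)]
          rw [iht, List.count_cons]
          simp [hac]

lemma len_le_sum : ∀ l : List ℕ, (∀ x ∈ l, 1 ≤ x) → l.length ≤ l.sum := by
  intro l
  induction l with
  | nil => intro _; simp
  | cons a t ih =>
    intro h
    have h1 := h a List.mem_cons_self
    have h2 := ih (fun x hx => h x (List.mem_cons_of_mem _ hx))
    simp only [List.length_cons, List.sum_cons]
    omega

lemma lemN (l1 l2 : List ℕ) (hlen : l1.length = l2.length)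
    (h1 : ∀ x ∈ l1, 1 ≤ x) (h2 : ∀ x ∈ l2, 1 ≤ x)
    (hs : l1.sum = l2.sum) (hb : l1.sum ≤ 2) : l1 = l2 := by
  have hl1 := len_le_sum l1 h1
  have hlen2 : l1.length ≤ 2 := le_trans hl1 hb
  rcases l1 with _ | ⟨a, _ | ⟨b, l⟩⟩
  · cases l2 with
    | nil => rfl
    | cons x t => simp at hlen
  · rcases l2 with _ | ⟨a', _ | ⟨b', t'⟩⟩
    · simp at hlen
    · have : a = a' := by simpa using hs
      rw [this]
    · simp at hlen
  · have hl : l = [] := by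
      simp only [List.length_cons, List.length_nil] at hlen2
      exact List.length_eq_zero_iff.mp (by omega)
    subst hl
    rcases l2 with _ | ⟨a', _ | ⟨b', t'⟩⟩
    · simp at hlen
    · simp at hlen
    · have ht' : t' = [] := by
        simp only [List.length_cons, List.length_nil] at hlen
        exact List.length_eq_zero_iff.mp (by omega)
      subst ht'
      have ha := h1 a (by simp)
      have hbb := h1 b (by simp)
      have ha' := h2 a' (by simp)
      have hb' := h2 b' (by simp)
      simp only [List.sum_cons, List.sum_nil] at hs hb
      have hab : a = a' ∧ b = b' := by omega
      rw [hab.1, hab.2]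

lemma filterLen (c : Var) : ∀ (L1 L2 : List (Var × ℕ)),
    L1.map Prod.fst = L2.map Prod.fst →
    (L1.filter (fun e => e.1 == c)).length = (L2.filter (fun e => e.1 == c)).length := by
  intro L1
  induction L1 with
  | nil =>
    intro L2 h
    cases L2 with
    | nil => rfl
    | cons e T => simp at h
  | cons e T ih =>
    intro L2 h
    cases L2 with
    | nil => simp at h
    | cons e' T' =>
      simp only [List.map_cons, List.cons.injEq] at h
      obtain ⟨hfst, htail⟩ := h
      simp only [List.filter_cons]
      by_cases hc : e.1 = c
      · rw [if_pos (by simpa using hc), if_pos (by simp [← hfst, hc])]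
        simp [ih T' htail]
      · rw [if_neg (by simpa using hc), if_neg (by simp [← hfst]; exact hc)]
        exact ih T' htail

lemma lemP (Θ : Var → Word) : ∀ (L1 L2 : List (Var × ℕ)),
    L1.map Prod.fst = L2.map Prod.fst →
    (∀ e ∈ L1, 1 ≤ e.2) → (∀ e ∈ L2, 1 ≤ e.2) →
    (∀ c : Var,
      (∀ p q : ℕ, 1 ≤ p → 1 ≤ q →
        D (subst Θ (List.replicate p c)) = D (subst Θ (List.replicate q c))) ∨
      ((L1.filter (fun e => e.1 == c)).map Prod.snd
        = (L2.filter (fun e => e.1 == c)).map Prod.snd)) →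
    L1.map (fun e => D (subst Θ (List.replicate e.2 e.1)))
      = L2.map (fun e => D (subst Θ (List.replicate e.2 e.1))) := by
  intro L1
  induction L1 with
  | nil =>
    intro L2 h _ _ _
    cases L2 with
    | nil => rfl
    | cons e T => simp at h
  | cons e T ih =>
    intro L2 h h1 h2 hcond
    cases L2 with
    | nil => simp at h
    | cons e' T' =>
      simp only [List.map_cons, List.cons.injEq] at h
      obtain ⟨hfst, htail⟩ := h
      have hhead : D (subst Θ (List.replicate e.2 e.1))
          = D (subst Θ (List.replicate e'.2 e'.1)) := by
        rcases hcond e.1 with hgood | hfil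
        · rw [← hfst]
          exact hgood e.2 e'.2 (h1 e List.mem_cons_self)
            (h2 e' List.mem_cons_self)
        · simp only [List.filter_cons, beq_self_eq_true, if_pos] at hfil
          rw [if_pos (by simp [← hfst])] at hfil
          simp only [List.map_cons, List.cons.injEq] at hfil
          rw [← hfst, hfil.1]
      have htails : T.map (fun e => D (subst Θ (List.replicate e.2 e.1)))
          = T'.map (fun e => D (subst Θ (List.replicate e.2 e.1))) := by
        apply ih T' htail (fun x hx => h1 x (List.mem_cons_of_mem _ hx))
          (fun x hx => h2 x (List.mem_cons_of_mem _ hx))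
        intro c
        rcases hcond c with hgood | hfil
        · exact Or.inl hgood
        · right
          by_cases hc : e.1 = c
          · simp only [List.filter_cons] at hfil
            rw [if_pos (by simpa using hc), if_pos (by simp [← hfst, hc])] at hfil
            simp only [List.map_cons, List.cons.injEq] at hfil
            exact hfil.2
          · simp only [List.filter_cons] at hfil
            rw [if_neg (by simpa using hc), if_neg (by simp [← hfst]; exact hc)] at hfil
            exact hfil
      simp only [List.map_cons]
      rw [hhead, htails]

lemma single_letter {Θ : Var → Word} {c : Var}
    (hcard : (Θ c).toFinset.card ≤ 1) (hne : Θ c ≠ []) :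
    ∃ (a : Var) (m : ℕ), Θ c = List.replicate (m + 1) a := by
  rcases hθ : Θ c with _ | ⟨a, t⟩
  · exact absurd hθ hne
  · refine ⟨a, t.length, ?_⟩
    rw [List.eq_replicate_iff]
    refine ⟨by simp, ?_⟩
    intro b hb
    have hb' : b ∈ (Θ c).toFinset := by rw [hθ]; simpa using hb
    have ha' : a ∈ (Θ c).toFinset := by rw [hθ]; simp
    exact Finset.card_le_one.mp hcard _ hb' _ ha'

lemma substRepl {Θ : Var → Word} {c a : Var} {m : ℕ}
    (h : Θ c = List.replicate m a) :
    ∀ k : ℕ, subst Θ (List.replicate k c) = List.replicate (k * m) a := by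
  intro k
  induction k with
  | zero => simp [subst]
  | succ n ih =>
    rw [List.replicate_succ]
    show Θ c ++ subst Θ (List.replicate n c) = _
    rw [h, ih, ← List.replicate_add]
    congr 1
    ring

lemma subst_flatten (Θ : Var → Word) : ∀ L : List Word,
    subst Θ L.flatten = (L.map (subst Θ)).flatten := by
  intro L
  induction L with
  | nil => rfl
  | cons h T ih =>
    simp only [List.flatten_cons, List.map_cons]
    show subst Θ (h ++ T.flatten) = _
    rw [show subst Θ (h ++ T.flatten) = subst Θ h ++ subst Θ T.flatten from
      List.flatMap_append, ih]

lemma final_eq (Θ : Var → Word) (w : Word) :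
    D (subst Θ w)
      = D (((rle w).map (fun e => D (subst Θ (List.replicate e.2 e.1)))).flatten) := by
  conv_lhs => rw [← rle_r1 w]
  rw [subst_flatten, lemJ, List.map_map, List.map_map]
  rfl

end Stmt10Aux

open Stmt10Aux

/-- if `u` and `v` are of the same type with the same linear
variables, the same variables occurring twice and the same variables occurring
more than twice, and `Θ` maps every variable occurring at least three times
to a power of a single variable, then `Θ(u)` and `Θ(v)` are of the same
type. -/
theorem stmt10 (u v : Word) (hu : u ≠ []) (hv : v ≠ [])
    (hst : sameType u v)
    (hlin : lin u = lin v) (h2 : con2 u = con2 v) (h3 : conGt2 u = conGt2 v)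
    (Θ : Var → Word) (hΘne : ∀ c : Var, Θ c ≠ [])
    (hΘ : ∀ x : Var, 2 ≤ (Θ x).toFinset.card → x ∈ lin u ∪ con2 u) :
    sameType (subst Θ u) (subst Θ v) := by
  classical
  have hD : D u = D v := hst
  have hfst : (rle u).map Prod.fst = (rle v).map Prod.fst := by
    rw [rle_r2, rle_r2]; exact hD
  have hcond : ∀ c : Var,
      (∀ p q : ℕ, 1 ≤ p → 1 ≤ q →
        D (subst Θ (List.replicate p c)) = D (subst Θ (List.replicate q c))) ∨
      (((rle u).filter (fun e => e.1 == c)).map Prod.snd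
        = ((rle v).filter (fun e => e.1 == c)).map Prod.snd) := by
    intro c
    by_cases hcard : 2 ≤ (Θ c).toFinset.card
    · right
      have hc2 := hΘ c hcard
      have hcount : u.count c = v.count c ∧ u.count c ≤ 2 := by
        rcases hc2 with hc | hc
        · have h1 : u.count c = 1 := hc
          have h2 : v.count c = 1 := by
            have : c ∈ lin v := hlin ▸ hc
            exact this
          exact ⟨by omega, by omega⟩
        · have h1 : u.count c = 2 := hc
          have h2 : v.count c = 2 := by
            have : c ∈ con2 v := h2 ▸ hc
            exact this
          exact ⟨by omega, by omega⟩
      apply lemN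
      · rw [List.length_map, List.length_map]
        exact filterLen c _ _ hfst
      · intro x hx
        simp only [List.mem_map] at hx
        obtain ⟨e, he, hex⟩ := hx
        rw [← hex]
        exact rle_r3 u e (List.mem_of_mem_filter he)
      · intro x hx
        simp only [List.mem_map] at hx
        obtain ⟨e, he, hex⟩ := hx
        rw [← hex]
        exact rle_r3 v e (List.mem_of_mem_filter he)
      · rw [rle_r4, rle_r4]
        exact hcount.1
      · rw [rle_r4]
        exact hcount.2
    · left
      push_neg at hcard
      obtain ⟨a, m, ha⟩ := single_letter (by omega) (hΘne c)
      intro p q hp hq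
      rw [substRepl ha p, substRepl ha q]
      have hppos : 0 < p * (m + 1) := Nat.mul_pos hp (Nat.succ_pos m)
      have hqpos : 0 < q * (m + 1) := Nat.mul_pos hq (Nat.succ_pos m)
      obtain ⟨p', hp'⟩ : ∃ p', p * (m + 1) = p' + 1 :=
        ⟨p * (m + 1) - 1, by omega⟩
      obtain ⟨q', hq'⟩ : ∃ q', q * (m + 1) = q' + 1 :=
        ⟨q * (m + 1) - 1, by omega⟩
      rw [hp', hq', destutter_replicate, destutter_replicate]
  have key := lemP Θ (rle u) (rle v) hfst (rle_r3 u) (rle_r3 v) hcond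
  show D (subst Θ u) = D (subst Θ v)
  rw [final_eq Θ u, final_eq Θ v, key]
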